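/- For every prior π ∈ Δ(Ω) and every λ ∈ Δ(M), the set E(π,λ) of equilibrium payoff vectors of the persuasion model with partial commitment is a nonempty compact subset of ℝ². In particular, a sender-optimal equilibrium payoff exists: the maximum of the first coordinate over E(π,λ) is attained. -/

import Mathlib

open Finset

noncomputable section

/-- The receiver's best-response set `A*(p) = argmax_a ∑ ω, p ω * uR ω a`. -/
def Astar {Ω A : Type*} [Fintype Ω] (uR : Ω → A → ℝ) (p : Ω → ℝ) : Set A :=
  {a | ∀ b, ∑ ω, p ω * uR ω b ≤ ∑ ω, p ω * uR ω a}

/-- `(p m) ∈ Σ(π, lam)`: every `p m` is a belief and `∑ m, lam m • p m = π`. -/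
def BayesPlausible {Ω M : Type*} [Fintype Ω] [Fintype M]
    (π : Ω → ℝ) (lam : M → ℝ) (p : M → Ω → ℝ) : Prop :=
  (∀ m, p m ∈ stdSimplex ℝ Ω) ∧ ∀ ω, ∑ m, lam m * p m ω = π ω

/-- (Eq-R): for every `m` with `lam m > 0`, the response rule `κ(·∣m)` is
supported on the receiver's best responses to the posterior `p m`. -/
def EqR {Ω M A : Type*} [Fintype Ω]
    (uR : Ω → A → ℝ) (lam : M → ℝ) (p : M → Ω → ℝ) (κ : M → A → ℝ) : Prop :=
  ∀ m, 0 < lam m → ∀ a, 0 < κ m a → a ∈ Astar uR (p m)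

/-- (Eq-S): the sender cannot profitably deviate within `Σ(π, lam)`. -/
def EqS {Ω M A : Type*} [Fintype Ω] [Fintype M] [Fintype A]
    (uS : Ω → A → ℝ) (π : Ω → ℝ) (lam : M → ℝ)
    (p : M → Ω → ℝ) (κ : M → A → ℝ) : Prop :=
  ∀ pt : M → Ω → ℝ, BayesPlausible π lam pt →
    0 ≤ ∑ m, lam m * ∑ ω, (p m ω - pt m ω) * ∑ a, κ m a * uS ω a

/-- Expected payoff `∑ m, lam m * ∑ ω, p m ω * ∑ a, κ a m * u ω a`. -/
def payoffOf {Ω M A : Type*} [Fintype Ω] [Fintype M] [Fintype A]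
    (u : Ω → A → ℝ) (lam : M → ℝ) (p : M → Ω → ℝ) (κ : M → A → ℝ) : ℝ :=
  ∑ m, lam m * ∑ ω, p m ω * ∑ a, κ m a * u ω a

/-- `E(π, lam)`: the set of equilibrium payoff vectors of the persuasion model
with partial commitment. -/
def Epayoffs {Ω A : Type*} (M : Type*) [Fintype Ω] [Fintype M] [Fintype A]
    (uS uR : Ω → A → ℝ) (π : Ω → ℝ) (lam : M → ℝ) : Set (ℝ × ℝ) :=
  {e | ∃ (p : M → Ω → ℝ) (κ : M → A → ℝ),
    BayesPlausible π lam p ∧ (∀ m, κ m ∈ stdSimplex ℝ A) ∧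
    EqR uR lam p κ ∧ EqS uS π lam p κ ∧
    e = (payoffOf uS lam p κ, payoffOf uR lam p κ)}

/-- closed reformulation of EqR -/
def EqR' {Ω M A : Type*} [Fintype Ω]
    (uR : Ω → A → ℝ) (lam : M → ℝ) (p : M → Ω → ℝ) (κ : M → A → ℝ) : Prop :=
  ∀ m, 0 < lam m → ∀ a b,
    κ m a * ((∑ ω, p m ω * uR ω b) - ∑ ω, p m ω * uR ω a) ≤ 0

lemma eqR_iff {Ω M A : Type*} [Fintype Ω]
    (uR : Ω → A → ℝ) (lam : M → ℝ) (p : M → Ω → ℝ) (κ : M → A → ℝ)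
    (hκ : ∀ m a, 0 ≤ κ m a) :
    EqR uR lam p κ ↔ EqR' uR lam p κ := by
  constructor
  · intro h m hm a b
    rcases lt_or_eq_of_le (hκ m a) with hpos | h0
    · have h1 := h m hm a hpos b
      have h2 : (∑ ω, p m ω * uR ω b) - ∑ ω, p m ω * uR ω a ≤ 0 := by
        simpa [sub_nonpos] using h1
      exact mul_nonpos_of_nonneg_of_nonpos (hκ m a) h2
    · simp [← h0]
  · intro h m hm a hpos b
    have := h m hm a b
    nlinarith

lemma isClosed_of_imp {X : Type*} [TopologicalSpace X] {c : Prop} {P : X → Prop}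
    (h : c → IsClosed {x | P x}) : IsClosed {x | c → P x} := by
  by_cases hc : c
  · simpa [hc] using h hc
  · have : {x : X | c → P x} = Set.univ := by ext x; simp [hc]
    rw [this]; exact isClosed_univ


/-- For every prior `π ∈ Δ(Ω)` and marginal `lam ∈ Δ(M)`, the set
`E(π, lam)` of equilibrium payoff vectors of the persuasion model with partial
commitment is a nonempty compact subset of `ℝ²`; in particular a sender-optimal
equilibrium payoff exists. -/
theorem stmt6 {Ω M A : Type*} [Fintype Ω] [Nonempty Ω] [Fintype M] [Nonempty M]
    [Fintype A] [Nonempty A]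
    (uS uR : Ω → A → ℝ) (π : Ω → ℝ) (lam : M → ℝ)
    (hπ : π ∈ stdSimplex ℝ Ω) (hlam : lam ∈ stdSimplex ℝ M) :
    (Epayoffs M uS uR π lam).Nonempty ∧
    IsCompact (Epayoffs M uS uR π lam) ∧
    ∃ e ∈ Epayoffs M uS uR π lam, ∀ e' ∈ Epayoffs M uS uR π lam, e'.1 ≤ e.1 := by
  classical
  set φ : ((M → Ω → ℝ) × (M → A → ℝ)) → ℝ × ℝ :=
    fun q => (payoffOf uS lam q.1 q.2, payoffOf uR lam q.1 q.2) with hφdef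
  set S : Set ((M → Ω → ℝ) × (M → A → ℝ)) :=
    {q | BayesPlausible π lam q.1 ∧ (∀ m, q.2 m ∈ stdSimplex ℝ A) ∧
      EqR uR lam q.1 q.2 ∧ EqS uS π lam q.1 q.2} with hSdef
  have hE : Epayoffs M uS uR π lam = φ '' S := by
    ext e
    constructor
    · rintro ⟨p, κ, h1, h2, h3, h4, rfl⟩
      exact ⟨(p, κ), ⟨h1, h2, h3, h4⟩, rfl⟩
    · rintro ⟨⟨p, κ⟩, ⟨h1, h2, h3, h4⟩, rfl⟩
      exact ⟨p, κ, h1, h2, h3, h4, rfl⟩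
  -- nonemptiness of S: babbling equilibrium
  obtain ⟨a0, -, ha0⟩ := Finset.exists_max_image (univ : Finset A)
    (fun a => ∑ ω, π ω * uR ω a) univ_nonempty
  set p0 : M → Ω → ℝ := fun _ => π with hp0
  set κ0 : M → A → ℝ := fun _ a => if a = a0 then (1 : ℝ) else 0 with hκ0
  have hκ0sum : ∀ ω m, ∑ a, κ0 m a * uS ω a = uS ω a0 := by
    intro ω m
    simp [hκ0, ite_mul]
  have hSne : ((p0, κ0) : (M → Ω → ℝ) × (M → A → ℝ)) ∈ S := by
    refine ⟨⟨fun _ => hπ, fun ω => ?_⟩, fun m => ⟨fun a => ?_, ?_⟩, ?_, ?_⟩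
    · rw [← Finset.sum_mul, hlam.2, one_mul]
    · simp only [hκ0]; split <;> norm_num
    · simp [hκ0]
    · intro m _ a ha b
      have haeq : a = a0 := by
        by_contra hne
        simp [hκ0, hne] at ha
      subst haeq
      exact ha0 b (mem_univ b)
    · intro pt hpt
      have key : ∑ m, lam m * ∑ ω, (p0 m ω - pt m ω) * ∑ a, κ0 m a * uS ω a = 0 := by
        have : ∀ m, (∑ ω, (p0 m ω - pt m ω) * ∑ a, κ0 m a * uS ω a)
            = ∑ ω, (π ω - pt m ω) * uS ω a0 := by
          intro m
          refine Finset.sum_congr rfl fun ω _ => ?_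
          rw [hκ0sum ω m]
        simp only [this]
        have swap : ∑ m, lam m * ∑ ω, (π ω - pt m ω) * uS ω a0
            = ∑ ω, ∑ m, lam m * ((π ω - pt m ω) * uS ω a0) := by
          rw [Finset.sum_comm]
          exact Finset.sum_congr rfl fun m _ => Finset.mul_sum _ _ _
        rw [swap]
        refine Finset.sum_eq_zero fun ω _ => ?_
        have e1 : ∑ m, lam m * ((π ω - pt m ω) * uS ω a0)
            = (∑ m, lam m) * π ω * uS ω a0 - (∑ m, lam m * pt m ω) * uS ω a0 := by
          simp only [Finset.sum_mul]
          rw [← Finset.sum_sub_distrib]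
          exact Finset.sum_congr rfl fun m _ => by ring
        rw [e1, hlam.2, hpt.2 ω]; ring
      rw [key]
  -- compactness of S
  have hScomp : IsCompact S := by
    have hsub : S ⊆ (Set.univ.pi fun _ : M => stdSimplex ℝ Ω) ×ˢ
        (Set.univ.pi fun _ : M => stdSimplex ℝ A) := by
      rintro ⟨p, κ⟩ ⟨h1, h2, -, -⟩
      exact ⟨fun m _ => h1.1 m, fun m _ => h2 m⟩
    have hKcomp : IsCompact ((Set.univ.pi fun _ : M => stdSimplex ℝ Ω) ×ˢ
        (Set.univ.pi fun _ : M => stdSimplex ℝ A)) :=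
      (isCompact_univ_pi fun _ => isCompact_stdSimplex ℝ Ω).prod
        (isCompact_univ_pi fun _ => isCompact_stdSimplex ℝ A)
    have hSclosed : IsClosed S := by
      have hSalt : S =
          {q : (M → Ω → ℝ) × (M → A → ℝ) | ∀ m, q.1 m ∈ stdSimplex ℝ Ω} ∩
          {q | ∀ ω, ∑ m, lam m * q.1 m ω = π ω} ∩
          {q | ∀ m, q.2 m ∈ stdSimplex ℝ A} ∩
          {q | EqR' uR lam q.1 q.2} ∩
          {q | EqS uS π lam q.1 q.2} := by
        ext ⟨p, κ⟩
        constructor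
        · rintro ⟨⟨h1a, h1b⟩, h2, h3, h4⟩
          exact ⟨⟨⟨⟨h1a, h1b⟩, h2⟩,
            (eqR_iff uR lam p κ (fun m a => (h2 m).1 a)).1 h3⟩, h4⟩
        · rintro ⟨⟨⟨⟨h1a, h1b⟩, h2⟩, h3⟩, h4⟩
          exact ⟨⟨h1a, h1b⟩, h2,
            (eqR_iff uR lam p κ (fun m a => (h2 m).1 a)).2 h3, h4⟩
      rw [hSalt]
      refine IsClosed.inter (IsClosed.inter (IsClosed.inter (IsClosed.inter ?_ ?_) ?_) ?_) ?_
      · have : {q : (M → Ω → ℝ) × (M → A → ℝ) | ∀ m, q.1 m ∈ stdSimplex ℝ Ω}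
            = ⋂ m, (fun q : (M → Ω → ℝ) × (M → A → ℝ) => q.1 m) ⁻¹' stdSimplex ℝ Ω := by
          ext q; simp
        rw [this]
        exact isClosed_iInter fun m =>
          (isClosed_stdSimplex ℝ Ω).preimage (by fun_prop)
      · have : {q : (M → Ω → ℝ) × (M → A → ℝ) | ∀ ω, ∑ m, lam m * q.1 m ω = π ω}
            = ⋂ ω, {q | ∑ m, lam m * q.1 m ω = π ω} := by
          ext q; simp
        rw [this]
        exact isClosed_iInter fun ω => isClosed_eq (by fun_prop) continuous_const
      · have : {q : (M → Ω → ℝ) × (M → A → ℝ) | ∀ m, q.2 m ∈ stdSimplex ℝ A}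
            = ⋂ m, (fun q : (M → Ω → ℝ) × (M → A → ℝ) => q.2 m) ⁻¹' stdSimplex ℝ A := by
          ext q; simp
        rw [this]
        exact isClosed_iInter fun m =>
          (isClosed_stdSimplex ℝ A).preimage (by fun_prop)
      · have : {q : (M → Ω → ℝ) × (M → A → ℝ) | EqR' uR lam q.1 q.2}
            = ⋂ m, ⋂ a, ⋂ b, {q : (M → Ω → ℝ) × (M → A → ℝ) | 0 < lam m →
              q.2 m a * ((∑ ω, q.1 m ω * uR ω b) - ∑ ω, q.1 m ω * uR ω a) ≤ 0} := by
          ext q; simp [EqR']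
          constructor
          · intro h m a b hm; exact h m hm a b
          · intro h m hm a b; exact h m a b hm
        rw [this]
        exact isClosed_iInter fun m => isClosed_iInter fun a => isClosed_iInter fun b =>
          isClosed_of_imp fun _ => isClosed_le (by fun_prop) continuous_const
      · have : {q : (M → Ω → ℝ) × (M → A → ℝ) | EqS uS π lam q.1 q.2}
            = ⋂ pt : M → Ω → ℝ, {q : (M → Ω → ℝ) × (M → A → ℝ) |
              BayesPlausible π lam pt →
              0 ≤ ∑ m, lam m * ∑ ω, (q.1 m ω - pt m ω) * ∑ a, q.2 m a * uS ω a} := by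
          ext q; simp [EqS]
        rw [this]
        exact isClosed_iInter fun pt =>
          isClosed_of_imp fun _ => isClosed_le continuous_const (by fun_prop)
    exact hKcomp.of_isClosed_subset hSclosed hsub
  have hφcont : Continuous φ := by
    refine Continuous.prodMk ?_ ?_ <;> · unfold payoffOf; fun_prop
  have hEcomp : IsCompact (Epayoffs M uS uR π lam) := by
    rw [hE]; exact hScomp.image hφcont
  have hEne : (Epayoffs M uS uR π lam).Nonempty := by
    rw [hE]; exact ⟨φ (p0, κ0), Set.mem_image_of_mem φ hSne⟩
  refine ⟨hEne, hEcomp, ?_⟩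
  obtain ⟨e, he, hmax⟩ := hEcomp.exists_isMaxOn hEne continuous_fst.continuousOn
  exact ⟨e, he, fun e' he' => hmax he'⟩
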